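/- The number of distinct prime divisors of the Mersenne number M_m = 2^m − 1 is at least 2^{ω(m)} − 2, where ω(m) is the number of distinct prime divisors of m. -/

import Mathlib

open Polynomial Finset



lemma dvd_two_pow_sub_one_iff {p k : ℕ} :
    p ∣ 2 ^ k - 1 ↔ (2 : ZMod p) ^ k = 1 := by
  rw [← ZMod.natCast_eq_zero_iff]
  have h : (1:ℕ) ≤ 2 ^ k := Nat.one_le_two_pow
  push_cast [h]
  constructor
  · intro h'; linear_combination h'
  · intro h'; linear_combination h'

-- aux: a prime dividing both d and Φ_d(2)
lemma aux_ord {d p : ℕ} (hp : p.Prime) (hsq : Squarefree d) (h2d : 2 ≤ d)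
    (hpd : p ∣ d) (hpN : (p : ℤ) ∣ (cyclotomic d ℤ).eval 2) :
    2 < p ∧ orderOf (2 : ZMod p) = d / p ∧ 2 ≤ d / p ∧ d / p < p := by
  haveI : Fact p.Prime := ⟨hp⟩
  have hd0 : d ≠ 0 := by omega
  -- p is odd
  have hNdvd : (cyclotomic d ℤ).eval 2 ∣ 2 ^ d - 1 := by
    have h := cyclotomic.dvd_X_pow_sub_one (n := d) (R := ℤ)
    have := map_dvd (evalRingHom (2:ℤ)) h
    simpa using this
  have hp2d : (p:ℤ) ∣ 2 ^ d - 1 := hpN.trans hNdvd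
  have hpodd : 2 < p := by
    rcases hp.two_le.lt_or_eq with h | h
    · exact h
    · exfalso
      rw [← h] at hp2d
      have h2p : (2:ℤ) ∣ 2 ^ d := dvd_pow_self 2 hd0
      have h1 : (2:ℤ) ∣ 1 := by
        have := dvd_sub h2p hp2d
        simpa using this
      norm_num at h1
  -- ¬ p ∣ d / p
  have hnd : ¬ p ∣ d / p := by
    intro h
    have hdd : p * p ∣ d := by
      obtain ⟨k, hk⟩ := h
      have hdp : d / p * p = d := Nat.div_mul_cancel hpd
      exact ⟨k, by rw [← hdp, hk]; ring⟩
    exact hp.not_isUnit (hsq p hdd)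
  -- 2 is a root of cyclotomic d mod p
  have hroot : (cyclotomic d (ZMod p)).IsRoot 2 := by
    have h1 := eval_intCast_map (Int.castRingHom (ZMod p)) (cyclotomic d ℤ) 2
    rw [map_cyclotomic_int] at h1
    have h2 : (((cyclotomic d ℤ).eval 2 : ℤ) : ZMod p) = 0 := by
      rw [ZMod.intCast_zmod_eq_zero_iff_dvd]; exact_mod_cast hpN
    unfold IsRoot
    rw [show ((2:ℤ) : ZMod p) = (2 : ZMod p) by push_cast; ring] at h1
    rw [h1]
    exact h2
  -- collapse cyclotomic mod p
  have hdp : d / p * p = d := Nat.div_mul_cancel hpd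
  have hcol : cyclotomic d (ZMod p) = cyclotomic (d / p) (ZMod p) ^ (p - 1) := by
    have h := cyclotomic_mul_prime_eq_pow_of_not_dvd (ZMod p) hnd
    rwa [hdp] at h
  have hroot' : (cyclotomic (d / p) (ZMod p)).IsRoot 2 := by
    rw [hcol] at hroot
    unfold IsRoot at hroot ⊢
    rw [eval_pow] at hroot
    exact pow_eq_zero_iff (by omega : p - 1 ≠ 0) |>.mp hroot
  haveI : NeZero ((d / p : ℕ) : ZMod p) :=
    ⟨by rw [Ne, ZMod.natCast_eq_zero_iff]; exact hnd⟩
  have hprim : IsPrimitiveRoot (2 : ZMod p) (d / p) :=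
    (isRoot_cyclotomic_iff).mp hroot'
  have hord : orderOf (2 : ZMod p) = d / p := (hprim.eq_orderOf).symm
  -- d/p ≥ 2
  have hdp1 : d / p ≠ 1 := by
    intro h
    rw [h] at hord
    have := orderOf_eq_one_iff.mp hord
    have h1 : ((1:ℕ) : ZMod p) = 0 := by
      push_cast
      linear_combination this
    rw [ZMod.natCast_eq_zero_iff] at h1
    exact hp.one_lt.ne' (Nat.eq_one_of_dvd_one h1)  -- p ∣ 1
  have hdp0 : d / p ≠ 0 := by
    intro h
    rw [h] at hdp; omega
  -- d/p < p
  have h2ne : (2 : ZMod p) ≠ 0 := by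
    rw [show (2 : ZMod p) = ((2:ℕ) : ZMod p) by push_cast; ring, Ne,
      ZMod.natCast_eq_zero_iff]
    exact fun h => absurd (Nat.le_of_dvd two_pos h) (by omega)
  have hcard := ZMod.orderOf_dvd_card_sub_one h2ne
  rw [hord] at hcard
  have hle : d / p ≤ p - 1 := Nat.le_of_dvd (by omega) hcard
  obtain ⟨n, hn⟩ : ∃ n, d / p = n := ⟨_, rfl⟩
  rw [hn] at hord hdp1 hdp0 hle ⊢
  exact ⟨hpodd, hord, by omega, by omega⟩


lemma aux_sq_not_dvd {p e : ℕ} (hp : p.Prime) (hpodd : 2 < p) (he : 1 ≤ e)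
    (hpe : (p:ℤ) ∣ 2 ^ e - 1) :
    ¬ ((p:ℤ)^2 ∣ ∑ i ∈ range p, ((2:ℤ) ^ e) ^ i) := by
  haveI : Fact p.Prime := ⟨hp⟩
  intro hdvd
  set x : ℤ := 2 ^ e with hx
  set Q : ℤ := ∑ i ∈ range p, x ^ i with hQdef
  set R : ℤ := ∑ i ∈ range p, ∑ j ∈ range i, x ^ j with hRdef
  have hQR : Q - p = (x - 1) * R := by
    have h1 : ∀ i : ℕ, x ^ i - 1 = (x - 1) * ∑ j ∈ range i, x ^ j := by
      intro i
      rw [mul_comm, geom_sum_mul]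
    calc Q - p = ∑ i ∈ range p, (x ^ i - 1) := by
          rw [Finset.sum_sub_distrib]
          simp [hQdef]
      _ = (x - 1) * R := by
          rw [hRdef, Finset.mul_sum]
          exact Finset.sum_congr rfl fun i _ => h1 i
  have hpR : (p:ℤ) ∣ R := by
    rw [← ZMod.intCast_zmod_eq_zero_iff_dvd, hRdef]
    have hx1 : ((x : ℤ) : ZMod p) = 1 := by
      have h0 : ((x - 1 : ℤ) : ZMod p) = 0 := by
        rw [ZMod.intCast_zmod_eq_zero_iff_dvd]; exact hpe
      push_cast at h0 ⊢
      linear_combination h0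
    push_cast
    rw [show ∑ i ∈ range p, ∑ j ∈ range i, ((x:ℤ) : ZMod p) ^ j
        = ∑ i ∈ range p, ∑ j ∈ range i, (1 : ZMod p) from
      Finset.sum_congr rfl fun i _ => Finset.sum_congr rfl fun j _ => by rw [hx1, one_pow]]
    simp only [Finset.sum_const, Finset.card_range, nsmul_eq_mul, mul_one]
    -- ∑ i in range p, (i : ZMod p) = 0
    have hs : ((∑ i ∈ range p, i : ℕ) : ZMod p) = 0 := by
      rw [ZMod.natCast_eq_zero_iff]
      have h2 := Finset.sum_range_id_mul_two p
      have hpdvd : p ∣ (∑ i ∈ range p, i) * 2 := by rw [h2]; exact Dvd.intro _ rfl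
      rcases (Nat.Prime.dvd_mul hp).mp hpdvd with h | h
      · exact h
      · exact absurd (Nat.le_of_dvd two_pos h) (by omega)
    push_cast at hs
    exact hs
  have hp2 : (p:ℤ)^2 ∣ Q - p := by
    rw [hQR, sq]; exact mul_dvd_mul hpe hpR
  have hpp : (p:ℤ)^2 ∣ (p:ℤ) := by
    have h := dvd_sub hdvd hp2
    simpa using h
  have hle := Int.le_of_dvd (by positivity) hpp
  have : (3:ℤ) ≤ (p:ℤ) := by exact_mod_cast hpodd
  nlinarith


lemma three_mul_le_two_pow : ∀ n : ℕ, 5 ≤ n → 3 * n + 1 ≤ 2 ^ n := by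
  intro n hn
  induction n with
  | zero => omega
  | succ k ih =>
    rcases Nat.lt_or_ge k 5 with h | h
    · interval_cases k <;> simp_all <;> omega
    · have := ih (by omega)
      have h2 : 2 ^ k ≥ 32 := by
        calc 2^k ≥ 2^5 := Nat.pow_le_pow_right (by norm_num) h
          _ = 32 := by norm_num
      rw [pow_succ]
      omega

lemma aux_size {p e : ℕ} (hp : p.Prime) (hpodd : 2 < p) (he2 : 2 ≤ e)
    (hval : (cyclotomic e ℤ).eval ((2:ℤ)^p) = p * (cyclotomic e ℤ).eval 2) : p = 3 := by
  by_contra hne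
  have hp5 : 5 ≤ p := by
    rcases Nat.lt_or_ge p 5 with h | h
    · interval_cases p <;> simp_all (config := {decide := true})
    · exact h
  set t := e.totient with ht
  have ht1 : 1 ≤ t := Nat.totient_pos.mpr (by omega)
  have hcast : ∀ x : ℤ, (cyclotomic e ℝ).eval ((x : ℝ)) = (((cyclotomic e ℤ).eval x : ℤ) : ℝ) := by
    intro x
    have h := eval_intCast_map (Int.castRingHom ℝ) (cyclotomic e ℤ) x
    rwa [map_cyclotomic_int] at h
  have hlow : ((2:ℝ)^p - 1) ^ t < (cyclotomic e ℝ).eval ((2:ℝ)^p) :=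
    sub_one_pow_totient_lt_cyclotomic_eval he2 (one_lt_pow₀ (by norm_num) (by omega))
  have hup : (cyclotomic e ℝ).eval 2 ≤ 3 ^ t := by
    have h := cyclotomic_eval_le_add_one_pow_totient (q := 2) (by norm_num) e
    norm_num at h
    exact h
  have heq : (cyclotomic e ℝ).eval ((2:ℝ)^p) = (p:ℝ) * (cyclotomic e ℝ).eval 2 := by
    have h1 := hcast ((2:ℤ)^p)
    have h2 := hcast 2
    push_cast at h1 h2
    rw [h1, h2, hval]
    push_cast
    ring
  have hposB : (0:ℝ) < (cyclotomic e ℝ).eval 2 := cyclotomic_pos' e (by norm_num)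
  have hkey : ((2:ℝ)^p - 1) ^ t < (p:ℝ) * 3 ^ t := by
    calc ((2:ℝ)^p - 1) ^ t < (cyclotomic e ℝ).eval ((2:ℝ)^p) := hlow
      _ = (p:ℝ) * (cyclotomic e ℝ).eval 2 := heq
      _ ≤ (p:ℝ) * 3 ^ t := by
          apply mul_le_mul_of_nonneg_left hup (by positivity)
  have h3p : (3:ℝ) * p ≤ (2:ℝ)^p - 1 := by
    have := three_mul_le_two_pow p hp5
    have hcast2 : ((3 * p + 1 : ℕ) : ℝ) ≤ ((2^p : ℕ) : ℝ) := Nat.cast_le.mpr this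
    push_cast at hcast2
    linarith
  have hcontra : ((3:ℝ) * p) ^ t < (p:ℝ) * 3 ^ t :=
    lt_of_le_of_lt (pow_le_pow_left₀ (by positivity) h3p t) hkey
  rw [mul_pow] at hcontra
  have hpt : (p:ℝ) ^ t < (p:ℝ) := by
    have h3 : (0:ℝ) < 3 ^ t := by positivity
    nlinarith
  have : (p:ℝ) ^ t < (p:ℝ) ^ 1 := by simpa using hpt
  have ht' : t < 1 := by
    have hp1 : (1:ℝ) < (p:ℝ) := by exact_mod_cast hp.one_lt
    exact (pow_lt_pow_iff_right₀ hp1).mp this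
  omega


lemma bang {d : ℕ} (hsq : Squarefree d) (h1 : d ≠ 1) (h6 : d ≠ 6) :
    ∃ p : ℕ, p.Prime ∧ orderOf (2 : ZMod p) = d := by
  have hd0 : d ≠ 0 := hsq.ne_zero
  have h2d : 2 ≤ d := by omega
  have hNpos : 0 < (cyclotomic d ℤ).eval 2 := cyclotomic_pos' d (by norm_num : (1:ℤ) < 2)
  have hN1 : 1 < ((cyclotomic d ℤ).eval 2).natAbs := by
    have h := sub_one_lt_natAbs_cyclotomic_eval (n := d) (q := 2) (by omega) (by norm_num)
    norm_num at h
    exact_mod_cast h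
  by_cases hex : ∃ q : ℕ, q.Prime ∧ (q:ℤ) ∣ (cyclotomic d ℤ).eval 2 ∧ ¬ q ∣ d
  · obtain ⟨q, hq, hqN, hqd⟩ := hex
    haveI : Fact q.Prime := ⟨hq⟩
    have hroot : (cyclotomic d (ZMod q)).IsRoot 2 := by
      have h1' := eval_intCast_map (Int.castRingHom (ZMod q)) (cyclotomic d ℤ) 2
      rw [map_cyclotomic_int] at h1'
      have h2' : (((cyclotomic d ℤ).eval 2 : ℤ) : ZMod q) = 0 := by
        rw [ZMod.intCast_zmod_eq_zero_iff_dvd]; exact_mod_cast hqN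
      unfold IsRoot
      rw [show ((2:ℤ) : ZMod q) = (2 : ZMod q) by push_cast; ring] at h1'
      rw [h1']; exact h2'
    haveI : NeZero ((d : ℕ) : ZMod q) :=
      ⟨by rw [Ne, ZMod.natCast_eq_zero_iff]; exact hqd⟩
    have hprim : IsPrimitiveRoot (2 : ZMod q) d := isRoot_cyclotomic_iff.mp hroot
    exact ⟨q, hq, hprim.eq_orderOf.symm⟩
  · exfalso
    push_neg at hex
    set p := ((cyclotomic d ℤ).eval 2).natAbs.minFac with hpdef
    have hp : p.Prime := Nat.minFac_prime (by omega)
    haveI : Fact p.Prime := ⟨hp⟩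
    have hpN : (p:ℤ) ∣ (cyclotomic d ℤ).eval 2 := by
      have h := Nat.minFac_dvd ((cyclotomic d ℤ).eval 2).natAbs
      exact (Int.dvd_natAbs).mp (Int.natCast_dvd_natCast.mpr h)
    have hpd : p ∣ d := hex p hp hpN
    obtain ⟨hpodd, hord, he2, hep⟩ := aux_ord hp hsq h2d hpd hpN
    obtain ⟨e, he⟩ : ∃ e, d / p = e := ⟨_, rfl⟩
    rw [he] at hord he2 hep
    have hdp : e * p = d := by rw [← he]; exact Nat.div_mul_cancel hpd
    -- p ∣ 2^e - 1
    have hpe : (p:ℤ) ∣ 2 ^ e - 1 := by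
      have h2 : (2 : ZMod p) ^ e = 1 := by rw [← hord]; exact pow_orderOf_eq_one _
      have h3 : p ∣ 2 ^ e - 1 := by
        rw [← ZMod.natCast_eq_zero_iff]
        have h : (1:ℕ) ≤ 2 ^ e := Nat.one_le_two_pow
        push_cast [h]
        linear_combination h2
      have := Int.natCast_dvd_natCast.mpr h3
      have hle : (1:ℕ) ≤ 2 ^ e := Nat.one_le_two_pow
      push_cast [hle] at this
      exact this
    -- N is a power of p
    have huniq : ∀ {q : ℕ}, q.Prime → q ∣ ((cyclotomic d ℤ).eval 2).natAbs → q = p := by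
      intro q hq hqN'
      by_contra hne
      have hqN : (q:ℤ) ∣ (cyclotomic d ℤ).eval 2 :=
        (Int.dvd_natAbs).mp (Int.natCast_dvd_natCast.mpr hqN')
      have hqd : q ∣ d := hex q hq hqN
      obtain ⟨hqodd, hordq, hq2, hqlt⟩ := aux_ord hq hsq h2d hqd hqN
      have hdq : (d / q) * q = d := Nat.div_mul_cancel hqd
      have hqe : q ∣ e := by
        rcases (Nat.Prime.dvd_mul hq).mp (hdp ▸ hqd) with h | h
        · exact h
        · exact absurd ((Nat.prime_dvd_prime_iff_eq hq hp).mp h) hne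
      have hA : q ≤ e := Nat.le_of_dvd (by omega) hqe
      have hpe' : p ∣ d / q := by
        rcases (Nat.Prime.dvd_mul hp).mp (hdq ▸ hpd) with h | h
        · exact h
        · exact absurd ((Nat.prime_dvd_prime_iff_eq hp hq).mp h) (Ne.symm hne)
      have hB : p ≤ d / q := Nat.le_of_dvd (by omega) hpe'
      omega
    have hNp := Nat.eq_prime_pow_of_unique_prime_dvd (by omega) huniq
    -- N divides the geometric sum Q
    have h2e1 : ((2:ℤ) ^ e - 1) ≠ 0 := by
      have : (2:ℤ) ≤ 2 ^ e := by
        calc (2:ℤ) = 2^1 := by norm_num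
          _ ≤ 2^e := pow_le_pow_right₀ (by norm_num) (by omega)
      omega
    have hNQ : (cyclotomic d ℤ).eval 2 ∣ ∑ i ∈ range p, ((2:ℤ) ^ e) ^ i := by
      have hmem : e ∈ d.properDivisors := by
        rw [Nat.mem_properDivisors]
        constructor
        · exact ⟨p, hdp.symm ▸ rfl⟩
        · calc e < p := hep
            _ ≤ e * p := Nat.le_mul_of_pos_left p (by omega)
            _ = d := hdp
      have h := X_pow_sub_one_mul_cyclotomic_dvd_X_pow_sub_one_of_dvd ℤ hmem
      have h2 := map_dvd (evalRingHom (2:ℤ)) h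
      simp only [map_mul, coe_evalRingHom, eval_sub, eval_pow, eval_X, eval_one] at h2
      have hgeom : ((2:ℤ) ^ e - 1) * (∑ i ∈ range p, ((2:ℤ) ^ e) ^ i) = 2 ^ d - 1 := by
        rw [mul_comm, geom_sum_mul, ← pow_mul, hdp]
      rw [← hgeom] at h2
      exact (mul_dvd_mul_iff_left h2e1).mp h2
    -- p^2 does not divide N, so N = p
    have hNeqp : (cyclotomic d ℤ).eval 2 = (p:ℤ) := by
      have hknot : ¬ (p^2 ∣ ((cyclotomic d ℤ).eval 2).natAbs) := by
        intro hsq2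
        have : ((p:ℤ))^2 ∣ (cyclotomic d ℤ).eval 2 := by
          have h' := (Int.dvd_natAbs).mp (Int.natCast_dvd_natCast.mpr hsq2)
          push_cast at h'
          exact h'
        exact aux_sq_not_dvd hp hpodd (by omega) hpe (this.trans hNQ)
      have hk1 : ((cyclotomic d ℤ).eval 2).natAbs = p := by
        rcases Nat.lt_or_ge (((cyclotomic d ℤ).eval 2).natAbs.primeFactorsList.length) 2 with h | h
        · have hk0 : ((cyclotomic d ℤ).eval 2).natAbs.primeFactorsList.length ≠ 0 := by
            intro h0
            rw [h0] at hNp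
            simp at hNp
            omega
          have : ((cyclotomic d ℤ).eval 2).natAbs.primeFactorsList.length = 1 := by omega
          rw [this] at hNp
          simpa using hNp
        · exfalso
          apply hknot
          rw [hNp]
          exact pow_dvd_pow p h
      have := Int.natAbs_of_nonneg hNpos.le
      rw [← this, hk1]
    -- expand identity and size bound
    have hnpe : ¬ p ∣ e := fun h => absurd (Nat.le_of_dvd (by omega) h) (by omega)
    have hexp := cyclotomic_expand_eq_cyclotomic_mul hp hnpe ℤ
    have hval : (cyclotomic e ℤ).eval ((2:ℤ)^p) = p * (cyclotomic e ℤ).eval 2 := by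
      have h := congrArg (eval (2:ℤ)) hexp
      rw [expand_eval, eval_mul, hdp, hNeqp] at h
      exact h
    have hp3 : p = 3 := aux_size hp hpodd he2 hval
    -- then e ∣ p - 1 = 2, e ≥ 2, so e = 2, d = 6
    have h2ne : (2 : ZMod p) ≠ 0 := by
      rw [show (2 : ZMod p) = ((2:ℕ) : ZMod p) by push_cast; ring, Ne,
        ZMod.natCast_eq_zero_iff]
      exact fun h => absurd (Nat.le_of_dvd two_pos h) (by omega)
    have hcard := ZMod.orderOf_dvd_card_sub_one h2ne
    rw [hord] at hcard
    have he_le : e ≤ p - 1 := Nat.le_of_dvd (by omega) hcard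
    apply h6
    rw [← hdp, hp3]
    have : e = 2 := by omega
    omega



-- p ∣ 2^k - 1 (naturals) iff 2^k = 1 in ZMod p
lemma two_pow_sub_one_dvd {d m : ℕ} (h : d ∣ m) : 2 ^ d - 1 ∣ 2 ^ m - 1 := by
  obtain ⟨k, rfl⟩ := h
  rw [pow_mul]
  simpa using Nat.sub_dvd_pow_sub_pow (2 ^ d) 1 k


theorem omega_mersenne_lower_bound (m : ℕ) (hm : 0 < m) :
    2 ^ m.primeFactors.card - 2 ≤ (2 ^ m - 1).primeFactors.card := by
  classical
  set T : Finset ℕ := {d ∈ m.divisors | Squarefree d} with hT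
  have hTcard : T.card = 2 ^ m.primeFactors.card := by
    have h0 : m ≠ 0 := hm.ne'
    have hv := Nat.divisors_filter_squarefree h0
    have : T.card = Multiset.card T.val := rfl
    rw [this, hv, Multiset.card_map, ← Finset.card_def, Finset.card_powerset]
    congr 1
    rw [Nat.factors_eq]
    simp
  set U : Finset ℕ := (T.erase 1).erase 6 with hU
  have hUcard : T.card - 2 ≤ U.card := by
    calc T.card - 2 ≤ (T.erase 1).card - 1 := by
          have := Finset.pred_card_le_card_erase (s := T) (a := 1); omega
      _ ≤ U.card := Finset.pred_card_le_card_erase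
  have key : ∀ d ∈ U, ∃ p : ℕ, p.Prime ∧ orderOf (2 : ZMod p) = d := by
    intro d hd
    have h6 : d ≠ 6 := Finset.ne_of_mem_erase hd
    have h1 : d ≠ 1 := Finset.ne_of_mem_erase (Finset.mem_of_mem_erase hd)
    have hdT : d ∈ T := Finset.mem_of_mem_erase (Finset.mem_of_mem_erase hd)
    exact bang (Finset.mem_filter.mp hdT).2 h1 h6
  choose! f hfp hfo using key
  have hinj : Set.InjOn f U := by
    intro a ha b hb hab
    rw [← hfo a ha, ← hfo b hb, hab]
  have hmaps : ∀ d ∈ U, f d ∈ (2 ^ m - 1).primeFactors := by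
    intro d hd
    have hdT : d ∈ T := Finset.mem_of_mem_erase (Finset.mem_of_mem_erase hd)
    have hdm : d ∣ m := Nat.dvd_of_mem_divisors (Finset.mem_filter.mp hdT).1
    have h2 : (2 : ZMod (f d)) ^ d = 1 := by
      have h := pow_orderOf_eq_one (2 : ZMod (f d)); rwa [hfo d hd] at h
    have hdvd : f d ∣ 2 ^ m - 1 :=
      (dvd_two_pow_sub_one_iff.mpr h2).trans (two_pow_sub_one_dvd hdm)
    refine Nat.mem_primeFactors.mpr ⟨hfp d hd, hdvd, ?_⟩
    have : 2 ≤ 2 ^ m := Nat.one_lt_two_pow_iff.mpr hm.ne'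
    omega
  have := Finset.card_le_card_of_injOn f hmaps hinj
  omega
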